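/- If a query S₀ loops with respect to a program P (has an infinite derivation), then every query S₀' that is more general than S₀ also loops with respect to P. -/

import Mathlib

/- A formalization of binary CLP(C): terms, constraints, queries, rules,
   derivation steps, loops, projections, filters, DN / DNlog / DNsyn. -/

namespace CLP

/-- First-order terms over a signature of function symbols `F` with arities `arF`. -/
inductive Tm (F : Type) (arF : F → ℕ) : Type
  | var : ℕ → Tm F arF
  | app : (f : F) → (Fin (arF f) → Tm F arF) → Tm F arF

variable {F : Type} {arF : F → ℕ} {Pc : Type} {arP : Pc → ℕ}
  {Prd : Type} {arPrd : Prd → ℕ} {D : Type}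

/-- Variables of a term. -/
def Tm.fv : Tm F arF → Finset ℕ
  | .var x => {x}
  | .app _ ts => Finset.univ.biUnion fun i => (ts i).fv

/-- Apply a variable substitution to a term. -/
def Tm.rename (σ : ℕ → ℕ) : Tm F arF → Tm F arF
  | .var x => .var (σ x)
  | .app f ts => .app f fun i => (ts i).rename σ

/-- Finite conjunctions of primitive constraints (including equality). -/
inductive Con (F : Type) (arF : F → ℕ) (Pc : Type) (arP : Pc → ℕ) : Type
  | tru : Con F arF Pc arP
  | eq : Tm F arF → Tm F arF → Con F arF Pc arP
  | prim : (c : Pc) → (Fin (arP c) → Tm F arF) → Con F arF Pc arP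
  | and : Con F arF Pc arP → Con F arF Pc arP → Con F arF Pc arP

/-- Variables of a constraint. -/
def Con.fv : Con F arF Pc arP → Finset ℕ
  | .tru => ∅
  | .eq s t => s.fv ∪ t.fv
  | .prim _ ts => Finset.univ.biUnion fun i => (ts i).fv
  | .and c d => c.fv ∪ d.fv

/-- Apply a variable substitution to a constraint. -/
def Con.rename (σ : ℕ → ℕ) : Con F arF Pc arP → Con F arF Pc arP
  | .tru => .tru
  | .eq s t => .eq (s.rename σ) (t.rename σ)
  | .prim c ts => .prim c fun i => (ts i).rename σ
  | .and c d => .and (c.rename σ) (d.rename σ)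

/-- The domain of computation `D_C`: an interpretation of the function and
constraint-predicate symbols over a domain `D`. -/
structure Interp (F : Type) (arF : F → ℕ) (Pc : Type) (arP : Pc → ℕ) (D : Type) where
  fn : (f : F) → (Fin (arF f) → D) → D
  pr : (c : Pc) → (Fin (arP c) → D) → Prop

/-- Evaluation of a term under a valuation `v : Var → D`. -/
def Tm.eval (If : (f : F) → (Fin (arF f) → D) → D) (v : ℕ → D) : Tm F arF → D
  | .var x => v x
  | .app f ts => If f fun i => (ts i).eval If v

/-- `D_C ⊨_v c`. -/
def Con.Sat (I : Interp F arF Pc arP D) (v : ℕ → D) : Con F arF Pc arP → Prop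
  | .tru => True
  | .eq s t => s.eval I.fn v = t.eval I.fn v
  | .prim c ts => I.pr c fun i => (ts i).eval I.fn v
  | .and c d => c.Sat I v ∧ d.Sat I v

/-- A query `⟨p(t̃) | d⟩`. -/
structure Query (F : Type) (arF : F → ℕ) (Pc : Type) (arP : Pc → ℕ)
    (Prd : Type) (arPrd : Prd → ℕ) where
  p : Prd
  args : Fin (arPrd p) → Tm F arF
  con : Con F arF Pc arP

/-- Variables of a query. -/
def Query.fv (S : Query F arF Pc arP Prd arPrd) : Finset ℕ :=
  (Finset.univ.biUnion fun i => (S.args i).fv) ∪ S.con.fv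

/-- Apply a variable substitution to a query. -/
def Query.rename (σ : ℕ → ℕ) (S : Query F arF Pc arP Prd arPrd) :
    Query F arF Pc arP Prd arPrd :=
  ⟨S.p, fun i => (S.args i).rename σ, S.con.rename σ⟩

/-- The set `[S]` of atoms (predicate applied to domain values) described by a query `S`. -/
def Query.set (I : Interp F arF Pc arP D) (S : Query F arF Pc arP Prd arPrd) :
    Set (Σ p : Prd, Fin (arPrd p) → D) :=
  { a | ∃ v : ℕ → D, S.con.Sat I v ∧ a = ⟨S.p, fun i => (S.args i).eval I.fn v⟩ }

/-- `S'` is more general than `S` iff `[S] ⊆ [S']`. -/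
def MoreGen (I : Interp F arF Pc arP D) (S' S : Query F arF Pc arP Prd arPrd) : Prop :=
  S.set I ⊆ S'.set I

/-- A binary rule `p(s̃) ← c ◇ q(t̃)`. -/
structure Rule (F : Type) (arF : F → ℕ) (Pc : Type) (arP : Pc → ℕ)
    (Prd : Type) (arPrd : Prd → ℕ) where
  hp : Prd
  hargs : Fin (arPrd hp) → Tm F arF
  con : Con F arF Pc arP
  bp : Prd
  bargs : Fin (arPrd bp) → Tm F arF

/-- Variables of a rule. -/
def Rule.fv (r : Rule F arF Pc arP Prd arPrd) : Finset ℕ :=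
  (Finset.univ.biUnion fun i => (r.hargs i).fv) ∪ r.con.fv ∪
    (Finset.univ.biUnion fun i => (r.bargs i).fv)

/-- Apply a variable substitution to a rule. -/
def Rule.rename (σ : ℕ → ℕ) (r : Rule F arF Pc arP Prd arPrd) : Rule F arF Pc arP Prd arPrd :=
  ⟨r.hp, fun i => (r.hargs i).rename σ, r.con.rename σ, r.bp, fun i => (r.bargs i).rename σ⟩

/-- `r'` is a variant of `r`: obtained by renaming the variables by a bijection. -/
def Rule.IsVariant (r r' : Rule F arF Pc arP Prd arPrd) : Prop :=
  ∃ ρ : ℕ ≃ ℕ, r' = r.rename ρ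

/-- The query `⟨H | c⟩` of a rule `H ← c ◇ B`. -/
def Rule.headQuery (r : Rule F arF Pc arP Prd arPrd) : Query F arF Pc arP Prd arPrd :=
  ⟨r.hp, r.hargs, r.con⟩

/-- The query `⟨B | c⟩` of a rule `H ← c ◇ B`. -/
def Rule.bodyQuery (r : Rule F arF Pc arP Prd arPrd) : Query F arF Pc arP Prd arPrd :=
  ⟨r.bp, r.bargs, r.con⟩

/-- The constraint `ũ = w̃` for two sequences of terms. -/
def argsEqCon {n : ℕ} (u w : Fin n → Tm F arF) : Con F arF Pc arP :=
  (List.ofFn fun i => Con.eq (u i) (w i)).foldr .and .tru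

/-- The constraint `s̃' = ũ ∧ c' ∧ d` of the query resulting from a derivation step of
`S = ⟨p(ũ) | d⟩` with input rule `r' = p(s̃') ← c' ◇ q(t̃')`. -/
def stepCon (r' : Rule F arF Pc arP Prd arPrd) (S : Query F arF Pc arP Prd arPrd)
    (h : r'.hp = S.p) : Con F arF Pc arP :=
  Con.and
    (argsEqCon (fun i : Fin (arPrd S.p) => r'.hargs (Fin.cast (congrArg arPrd h).symm i)) S.args)
    (Con.and r'.con S.con)

/-- Derivation step of `S` using the (already renamed-apart) input rule `r'`:
the constraint `s̃' = ũ ∧ c' ∧ d` must be satisfiable in `D_C`, and the resulting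
query is `⟨q(t̃') | s̃' = ũ ∧ c' ∧ d⟩`. -/
def StepWith (I : Interp F arF Pc arP D) (r' : Rule F arF Pc arP Prd arPrd)
    (S T : Query F arF Pc arP Prd arPrd) : Prop :=
  ∃ h : r'.hp = S.p, (∃ v : ℕ → D, (stepCon r' S h).Sat I v) ∧
    T = ⟨r'.bp, r'.bargs, stepCon r' S h⟩

/-- Derivation step `S ⟹_r T`: there is a variant `r'` of `r`, variable disjoint
with `S`, which is an input rule for a step from `S` to `T`. -/
def Step (I : Interp F arF Pc arP D) (r : Rule F arF Pc arP Prd arPrd)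
    (S T : Query F arF Pc arP Prd arPrd) : Prop :=
  ∃ r' : Rule F arF Pc arP Prd arPrd,
    r.IsVariant r' ∧ Disjoint r'.fv S.fv ∧ StepWith I r' S T

/-- `S₀` loops w.r.t. the program `P`: there is an infinite derivation of `P ∪ {S₀}`,
i.e. an infinite sequence of derivation steps whose input rules are variants of rules
of `P`, variable disjoint from `S₀` and from the input rules used at earlier steps
(standardization apart). -/
def Loops (I : Interp F arF Pc arP D) (P : Set (Rule F arF Pc arP Prd arPrd))
    (S₀ : Query F arF Pc arP Prd arPrd) : Prop :=
  ∃ (S : ℕ → Query F arF Pc arP Prd arPrd) (rv : ℕ → Rule F arF Pc arP Prd arPrd),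
    S 0 = S₀ ∧
    ∀ n : ℕ, (∃ r ∈ P, r.IsVariant (rv n)) ∧
      Disjoint (rv n).fv S₀.fv ∧ (∀ m < n, Disjoint (rv n).fv (rv m).fv) ∧
      StepWith I (rv n) (S n) (S (n + 1))

/-! ## Sets of positions, projections, filters -/

/-- The set `[S|τ]` of projected atoms described by the projection of a query on a
set of positions `τ`. -/
def Query.projSet (I : Interp F arF Pc arP D) (τ : ∀ p : Prd, Set (Fin (arPrd p)))
    (S : Query F arF Pc arP Prd arPrd) :
    Set (Σ p : Prd, {i : Fin (arPrd p) // i ∈ τ p} → D) :=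
  { a | ∃ v : ℕ → D, S.con.Sat I v ∧ a = ⟨S.p, fun i => (S.args i.1).eval I.fn v⟩ }

/-- The complement `τ̄` of a set of positions. -/
def complPos (τ : ∀ p : Prd, Set (Fin (arPrd p))) : ∀ p : Prd, Set (Fin (arPrd p)) :=
  fun p => (τ p)ᶜ

/-- A query over a projected predicate `p|τ`. -/
structure PQuery (F : Type) (arF : F → ℕ) (Pc : Type) (arP : Pc → ℕ)
    {Prd : Type} {arPrd : Prd → ℕ} (τ : ∀ p : Prd, Set (Fin (arPrd p))) (p : Prd) where
  args : {i : Fin (arPrd p) // i ∈ τ p} → Tm F arF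
  con : Con F arF Pc arP

/-- The set of projected atoms described by a projected query. -/
def PQuery.set (I : Interp F arF Pc arP D) {τ : ∀ p : Prd, Set (Fin (arPrd p))} {p : Prd}
    (Q : PQuery F arF Pc arP τ p) :
    Set (Σ q : Prd, {i : Fin (arPrd q) // i ∈ τ q} → D) :=
  { a | ∃ v : ℕ → D, Q.con.Sat I v ∧ a = ⟨p, fun i => (Q.args i).eval I.fn v⟩ }

/-- A filter `Δ = (τ, δ)`: a set of positions together with, for each predicate `p`,
a query `δ(p)` over the projected predicate `p|τ` with satisfiable constraint. -/
structure Filt {F : Type} {arF : F → ℕ} {Pc : Type} {arP : Pc → ℕ} {D : Type}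
    (I : Interp F arF Pc arP D) (Prd : Type) (arPrd : Prd → ℕ) where
  τ : ∀ p : Prd, Set (Fin (arPrd p))
  δ : ∀ p : Prd, PQuery F arF Pc arP τ p
  δ_sat : ∀ p : Prd, ∃ v : ℕ → D, (δ p).con.Sat I v

variable {I : Interp F arF Pc arP D}

/-- A query `S` satisfies the filter `Δ` iff `[S|τ] ⊆ [δ(rel(S))]`. -/
def Filt.Satisfies (Δ : Filt I Prd arPrd) (S : Query F arF Pc arP Prd arPrd) : Prop :=
  S.projSet I Δ.τ ⊆ (Δ.δ S.p).set I

/-- `S'` is `Δ`-more general than `S`: `S'|τ̄` is more general than `S|τ̄`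
and `S'` satisfies `Δ`. -/
def Filt.DeltaMoreGen (Δ : Filt I Prd arPrd) (S' S : Query F arF Pc arP Prd arPrd) : Prop :=
  S.projSet I (complPos Δ.τ) ⊆ S'.projSet I (complPos Δ.τ) ∧ Δ.Satisfies S'

/-- `Δ` is derivation neutral (DN) for `r`. -/
def Filt.DN (Δ : Filt I Prd arPrd) (r : Rule F arF Pc arP Prd arPrd) : Prop :=
  ∀ S T, Step I r S T → ∀ S', Δ.DeltaMoreGen S' S →
    ∃ T', Step I r S' T' ∧ Δ.DeltaMoreGen T' T

/-! ## Normalized rules and DNlog -/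

/-- A normalized rule `p(X̃) ← c ◇ q(Ỹ)` where `X̃, Ỹ` are disjoint sequences of
distinct variables. -/
structure NRule (F : Type) (arF : F → ℕ) (Pc : Type) (arP : Pc → ℕ)
    (Prd : Type) (arPrd : Prd → ℕ) where
  hp : Prd
  X : Fin (arPrd hp) → ℕ
  bp : Prd
  Y : Fin (arPrd bp) → ℕ
  hX : Function.Injective X
  hY : Function.Injective Y
  hXY : ∀ i j, X i ≠ Y j
  con : Con F arF Pc arP

/-- The underlying rule of a normalized rule. -/
def NRule.toRule (r : NRule F arF Pc arP Prd arPrd) : Rule F arF Pc arP Prd arPrd :=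
  ⟨r.hp, fun i => .var (r.X i), r.con, r.bp, fun i => .var (r.Y i)⟩

/-- `local_var(r) = Var(c) ∖ (Var(X̃) ∪ Var(Ỹ))`. -/
def NRule.localVar (r : NRule F arF Pc arP Prd arPrd) : Set ℕ :=
  ↑r.con.fv \ (Set.range r.X ∪ Set.range r.Y)

/-- `v` and `w` agree on all variables outside `W`. -/
def agreesOff (W : Set ℕ) (v w : ℕ → D) : Prop := ∀ x ∉ W, v x = w x

/-- Semantics under `v` of the formula `sat(s̃, Q) = ∃_{Var(Q')} (s̃ = ũ' ∧ d')`,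
`Q'` a variable-disjoint variant of `Q = ⟨p|τ(ũ) | d⟩`. -/
def satFor (I : Interp F arF Pc arP D) {τ : ∀ p : Prd, Set (Fin (arPrd p))} {p : Prd}
    (s : {i : Fin (arPrd p) // i ∈ τ p} → Tm F arF) (Q : PQuery F arF Pc arP τ p)
    (v : ℕ → D) : Prop :=
  ∃ w : ℕ → D, Q.con.Sat I w ∧ ∀ i, (s i).eval I.fn v = (Q.args i).eval I.fn w

/-- `Δ` is DNlog for a normalized rule `r = p(X̃) ← c ◇ q(Ỹ)`:
`D_C ⊨ c → ∀_{X̃|τ} [ sat(X̃|τ, δ(p)) → ∃_Y (sat(Ỹ|τ, δ(q)) ∧ c) ]` where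
`Y = Var(Ỹ|τ) ∪ local_var(r)`. -/
def Filt.DNlog (Δ : Filt I Prd arPrd) (r : NRule F arF Pc arP Prd arPrd) : Prop :=
  ∀ v : ℕ → D, r.con.Sat I v →
    ∀ v₁ : ℕ → D, agreesOff (r.X '' Δ.τ r.hp) v₁ v →
      satFor I (fun i => Tm.var (r.X i.1)) (Δ.δ r.hp) v₁ →
        ∃ v₂ : ℕ → D,
          agreesOff (r.Y '' Δ.τ r.bp ∪ r.localVar) v₂ v₁ ∧
          satFor I (fun i => Tm.var (r.Y i.1)) (Δ.δ r.bp) v₂ ∧ r.con.Sat I v₂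

/-! ## Flat rules and DNsyn -/

/-- Variables of a sequence of terms. -/
def varsOf {n : ℕ} (s : Fin n → Tm F arF) : Finset ℕ :=
  Finset.univ.biUnion fun i => (s i).fv

/-- Variables of the projection of a sequence of terms on a set of positions. -/
def varsOfProj {n : ℕ} (σ : Set (Fin n)) (s : Fin n → Tm F arF) : Set ℕ :=
  ⋃ i : {i : Fin n // i ∈ σ}, ↑(s i.1).fv

/-- A flat rule `p(X̃) ← (X̃ = s̃ ∧ Ỹ = t̃) ◇ q(Ỹ)` with `Var(s̃, t̃)` local. -/
structure FlatRule (F : Type) (arF : F → ℕ) (Pc : Type) (arP : Pc → ℕ)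
    (Prd : Type) (arPrd : Prd → ℕ) extends NRule F arF Pc arP Prd arPrd where
  s : Fin (arPrd hp) → Tm F arF
  t : Fin (arPrd bp) → Tm F arF
  con_eq : con = Con.and (argsEqCon (fun i => Tm.var (X i)) s)
                         (argsEqCon (fun i => Tm.var (Y i)) t)
  local_args : ∀ x ∈ varsOf s ∪ varsOf t, x ∉ Set.range X ∪ Set.range Y

/-! ## The constraint domain Term (logic programming) -/

/-- Finite trees (ground terms) over `F`. -/
inductive GTm (F : Type) (arF : F → ℕ) : Type
  | app : (f : F) → (Fin (arF f) → GTm F arF) → GTm F arF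

/-- Arities for the empty set of constraint-predicate symbols (only `=` is available). -/
def emptyAr : Empty → ℕ := fun c => c.elim

/-- The domain of computation of the constraint domain `Term`: the algebra of
finite trees, with no primitive constraints but equality. -/
def termInterp (F : Type) (arF : F → ℕ) : Interp F arF Empty emptyAr (GTm F arF) :=
  ⟨fun f ts => GTm.app f ts, fun c => c.elim⟩

end CLP
namespace CLP
variable {F : Type} {arF : F → ℕ} {Pc : Type} {arP : Pc → ℕ}
  {Prd : Type} {arPrd : Prd → ℕ} {D : Type}

theorem Tm.eval_rename (If : (f : F) → (Fin (arF f) → D) → D) (σ : ℕ → ℕ) (v : ℕ → D) :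
    ∀ t : Tm F arF, (t.rename σ).eval If v = t.eval If (fun x => v (σ x))
  | .var x => rfl
  | .app f ts => by
    simp only [Tm.rename, Tm.eval]
    exact congrArg _ (funext fun i => Tm.eval_rename If σ v (ts i))

theorem Con.Sat_rename (I : Interp F arF Pc arP D) (σ : ℕ → ℕ) (v : ℕ → D) :
    ∀ c : Con F arF Pc arP, (c.rename σ).Sat I v ↔ c.Sat I (fun x => v (σ x))
  | .tru => Iff.rfl
  | .eq s t => by simp only [Con.rename, Con.Sat, Tm.eval_rename]
  | .prim c ts => by simp only [Con.rename, Con.Sat, Tm.eval_rename]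
  | .and c d => by
    simp only [Con.rename, Con.Sat, Con.Sat_rename I σ v c, Con.Sat_rename I σ v d]

theorem Tm.eval_congr (If : (f : F) → (Fin (arF f) → D) → D) (v w : ℕ → D) :
    ∀ t : Tm F arF, (∀ x ∈ t.fv, v x = w x) → t.eval If v = t.eval If w
  | .var x, h => h x (by simp [Tm.fv])
  | .app f ts, h => by
    simp only [Tm.eval]
    exact congrArg _ (funext fun i => Tm.eval_congr If v w (ts i)
      (fun x hx => h x (by simp only [Tm.fv, Finset.mem_biUnion]; exact ⟨i, Finset.mem_univ i, hx⟩)))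

theorem Con.Sat_congr (I : Interp F arF Pc arP D) (v w : ℕ → D) :
    ∀ c : Con F arF Pc arP, (∀ x ∈ c.fv, v x = w x) → (c.Sat I v ↔ c.Sat I w)
  | .tru, _ => Iff.rfl
  | .eq s t, h => by
    simp only [Con.Sat]
    rw [Tm.eval_congr I.fn v w s fun x hx => h x (by simp [Con.fv, hx]),
        Tm.eval_congr I.fn v w t fun x hx => h x (by simp [Con.fv, hx])]
  | .prim c ts, h => by
    simp only [Con.Sat]
    rw [show (fun i => (ts i).eval I.fn v) = fun i => (ts i).eval I.fn w from
      funext fun i => Tm.eval_congr I.fn v w (ts i) fun x hx => h x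
        (by simp only [Con.fv, Finset.mem_biUnion]; exact ⟨i, Finset.mem_univ i, hx⟩)]
  | .and c d, h => by
    simp only [Con.Sat]
    rw [Con.Sat_congr I v w c fun x hx => h x (by simp [Con.fv, hx]),
        Con.Sat_congr I v w d fun x hx => h x (by simp [Con.fv, hx])]

theorem Tm.fv_rename (σ : ℕ → ℕ) :
    ∀ t : Tm F arF, (t.rename σ).fv = t.fv.image σ
  | .var x => by simp [Tm.rename, Tm.fv]
  | .app f ts => by
    simp only [Tm.rename, Tm.fv]
    ext x
    simp only [Finset.mem_biUnion, Finset.mem_image, Finset.mem_univ, true_and]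
    constructor
    · rintro ⟨i, hi⟩
      rw [Tm.fv_rename σ (ts i)] at hi
      obtain ⟨y, hy, rfl⟩ := Finset.mem_image.mp hi
      exact ⟨y, ⟨i, hy⟩, rfl⟩
    · rintro ⟨y, ⟨i, hy⟩, rfl⟩
      exact ⟨i, by rw [Tm.fv_rename σ (ts i)]; exact Finset.mem_image_of_mem σ hy⟩

theorem Con.fv_rename (σ : ℕ → ℕ) :
    ∀ c : Con F arF Pc arP, (c.rename σ).fv = c.fv.image σ
  | .tru => by simp [Con.rename, Con.fv]
  | .eq s t => by simp [Con.rename, Con.fv, Tm.fv_rename, Finset.image_union]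
  | .prim c ts => by
    simp only [Con.rename, Con.fv]
    ext x
    simp only [Finset.mem_biUnion, Finset.mem_image, Finset.mem_univ, true_and, Tm.fv_rename]
    constructor
    · rintro ⟨i, hi⟩
      obtain ⟨y, hy, rfl⟩ := hi
      exact ⟨y, ⟨i, hy⟩, rfl⟩
    · rintro ⟨y, ⟨i, hy⟩, rfl⟩
      exact ⟨i, ⟨y, hy, rfl⟩⟩
  | .and c d => by simp [Con.rename, Con.fv, Con.fv_rename σ c, Con.fv_rename σ d,
      Finset.image_union]

theorem Rule.fv_rename (σ : ℕ → ℕ) (r : Rule F arF Pc arP Prd arPrd) :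
    (r.rename σ).fv = r.fv.image σ := by
  have hargs : ∀ {n : ℕ} (ts : Fin n → Tm F arF),
      (Finset.univ.biUnion fun i => ((ts i).rename σ).fv) =
        (Finset.univ.biUnion fun i => (ts i).fv).image σ := by
    intro n ts
    ext x
    simp only [Finset.mem_biUnion, Finset.mem_image, Finset.mem_univ, true_and, Tm.fv_rename]
    constructor
    · rintro ⟨i, hi⟩
      obtain ⟨y, hy, rfl⟩ := hi
      exact ⟨y, ⟨i, hy⟩, rfl⟩
    · rintro ⟨y, ⟨i, hy⟩, rfl⟩
      exact ⟨i, ⟨y, hy, rfl⟩⟩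
  simp [Rule.rename, Rule.fv, hargs, Con.fv_rename, Finset.image_union]
  exact congrArg₂ (· ∪ ·) (hargs r.hargs) (congrArg₂ (· ∪ ·) rfl (hargs r.bargs))

theorem Tm.rename_comp (σ σ' : ℕ → ℕ) :
    ∀ t : Tm F arF, (t.rename σ).rename σ' = t.rename (fun x => σ' (σ x))
  | .var x => rfl
  | .app f ts => by
    simp only [Tm.rename]
    exact congrArg _ (funext fun i => Tm.rename_comp σ σ' (ts i))

theorem Con.rename_comp (σ σ' : ℕ → ℕ) :
    ∀ c : Con F arF Pc arP, (c.rename σ).rename σ' = c.rename (fun x => σ' (σ x))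
  | .tru => rfl
  | .eq s t => by simp [Con.rename, Tm.rename_comp]
  | .prim c ts => by simp [Con.rename, Tm.rename_comp]
  | .and c d => by simp [Con.rename, Con.rename_comp σ σ' c, Con.rename_comp σ σ' d]

theorem Rule.rename_comp (σ σ' : ℕ → ℕ) (r : Rule F arF Pc arP Prd arPrd) :
    (r.rename σ).rename σ' = r.rename (fun x => σ' (σ x)) := by
  simp [Rule.rename, Tm.rename_comp, Con.rename_comp]

theorem sat_foldr (I : Interp F arF Pc arP D) (v : ℕ → D) :
    ∀ l : List (Con F arF Pc arP), (l.foldr Con.and Con.tru).Sat I v ↔ ∀ c ∈ l, c.Sat I v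
  | [] => by simp [Con.Sat]
  | c :: t => by simp [Con.Sat, sat_foldr I v t]

theorem argsEqCon_sat (I : Interp F arF Pc arP D) (v : ℕ → D) {n : ℕ}
    (u w : Fin n → Tm F arF) :
    (argsEqCon (Pc := Pc) (arP := arP) u w).Sat I v ↔
      ∀ i, (u i).eval I.fn v = (w i).eval I.fn v := by
  simp only [argsEqCon, sat_foldr, List.mem_ofFn]
  constructor
  · intro h i; exact h _ ⟨i, rfl⟩
  · rintro h c ⟨i, rfl⟩; exact h i

theorem mem_fv_foldr (x : ℕ) :
    ∀ l : List (Con F arF Pc arP), x ∈ (l.foldr Con.and Con.tru).fv ↔ ∃ c ∈ l, x ∈ c.fv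
  | [] => by simp [Con.fv]
  | c :: t => by simp [Con.fv, mem_fv_foldr x t]

end CLP
namespace CLP
variable {F : Type} {arF : F → ℕ} {Pc : Type} {arP : Pc → ℕ}
  {Prd : Type} {arPrd : Prd → ℕ} {D : Type}

theorem prod_swaps_fixed (j : ℕ → ℕ) :
    ∀ (l : List ℕ) (x : ℕ), x ∉ l → (∀ a ∈ l, j a ≠ x) →
      ((l.map fun a => Equiv.swap a (j a)).prod) x = x
  | [], x, _, _ => rfl
  | a :: t, x, hx, hj => by
    simp only [List.map_cons, List.prod_cons, Equiv.Perm.mul_apply]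
    rw [prod_swaps_fixed j t x (fun h => hx (List.mem_cons_of_mem a h))
      (fun b hb => hj b (List.mem_cons_of_mem a hb))]
    exact Equiv.swap_apply_of_ne_of_ne
      (fun h => hx (h ▸ List.mem_cons_self (a := a) (l := t)))
      (fun h => hj a (List.mem_cons_self (a := a) (l := t)) h.symm)


theorem prod_swaps_apply' (j : ℕ → ℕ) (hinj : Function.Injective j) :
    ∀ (l : List ℕ), l.Nodup → (∀ a ∈ l, ∀ b ∈ l, j a ≠ b) →
      ∀ a ∈ l, ((l.map fun a => Equiv.swap a (j a)).prod) a = j a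
  | [], _, _, a, ha => absurd ha List.not_mem_nil
  | h :: t, hnd, hj, a, ha => by
    simp only [List.map_cons, List.prod_cons, Equiv.Perm.mul_apply]
    rcases List.mem_cons.mp ha with rfl | hat
    · rw [prod_swaps_fixed j t a (fun hmem => (List.nodup_cons.mp hnd).1 hmem)
        (fun b hb heq => hj b (List.mem_cons_of_mem a hb) a (List.mem_cons_self (a := a) (l := t)) heq)]
      exact Equiv.swap_apply_left a (j a)
    · rw [prod_swaps_apply' j hinj t (List.nodup_cons.mp hnd).2
        (fun x hx y hy => hj x (List.mem_cons_of_mem h hx) y (List.mem_cons_of_mem h hy))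
        a hat]
      exact Equiv.swap_apply_of_ne_of_ne
        (fun heq => hj a (List.mem_cons_of_mem h hat) h (List.mem_cons_self (a := h) (l := t)) heq)
        (fun heq => (List.nodup_cons.mp hnd).1 (hinj heq ▸ hat))

/-- Extend a fresh injection on a finite set to a permutation of `ℕ`. -/
theorem exists_perm_extend (A : Finset ℕ) (j : ℕ → ℕ) (hinj : Function.Injective j)
    (hout : ∀ x, j x ∉ A) : ∃ ρ : ℕ ≃ ℕ, ∀ x ∈ A, ρ x = j x := by
  refine ⟨(A.toList.map fun a => Equiv.swap a (j a)).prod, fun x hx => ?_⟩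
  exact prod_swaps_apply' j hinj A.toList A.nodup_toList
    (fun a _ b hb heq => hout a (heq ▸ Finset.mem_toList.mp hb)) x (Finset.mem_toList.mpr hx)

theorem sigma_helper {p q : Prd} (f : Fin (arPrd p) → D) (g : Fin (arPrd q) → D)
    (hpq : (⟨p, f⟩ : Σ r : Prd, Fin (arPrd r) → D) = ⟨q, g⟩) :
    ∃ e : p = q, ∀ i : Fin (arPrd q), f (Fin.cast (congrArg arPrd e).symm i) = g i := by
  obtain ⟨e, hf⟩ := Sigma.mk.inj_iff.mp hpq
  subst e
  exact ⟨rfl, fun i => congrFun (eq_of_heq hf) i⟩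

end CLP
namespace CLP
variable {F : Type} {arF : F → ℕ} {Pc : Type} {arP : Pc → ℕ}
  {Prd : Type} {arPrd : Prd → ℕ} {D : Type}

theorem hargs_fv_subset (r' : Rule F arF Pc arP Prd arPrd) (i : Fin (arPrd r'.hp)) :
    (r'.hargs i).fv ⊆ r'.fv := by
  intro x hx
  simp only [Rule.fv, Finset.mem_union, Finset.mem_biUnion]
  exact Or.inl (Or.inl ⟨i, Finset.mem_univ i, hx⟩)

theorem bargs_fv_subset (r' : Rule F arF Pc arP Prd arPrd) (i : Fin (arPrd r'.bp)) :
    (r'.bargs i).fv ⊆ r'.fv := by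
  intro x hx
  simp only [Rule.fv, Finset.mem_union, Finset.mem_biUnion]
  exact Or.inr ⟨i, Finset.mem_univ i, hx⟩

theorem rcon_fv_subset (r' : Rule F arF Pc arP Prd arPrd) : r'.con.fv ⊆ r'.fv := by
  intro x hx
  simp only [Rule.fv, Finset.mem_union]
  exact Or.inl (Or.inr hx)

theorem qargs_fv_subset (S : Query F arF Pc arP Prd arPrd) (i : Fin (arPrd S.p)) :
    (S.args i).fv ⊆ S.fv := by
  intro x hx
  simp only [Query.fv, Finset.mem_union, Finset.mem_biUnion]
  exact Or.inl ⟨i, Finset.mem_univ i, hx⟩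

theorem qcon_fv_subset (S : Query F arF Pc arP Prd arPrd) : S.con.fv ⊆ S.fv := by
  intro x hx
  simp only [Query.fv, Finset.mem_union]
  exact Or.inr hx

theorem lifting (I : Interp F arF Pc arP D) (r' : Rule F arF Pc arP Prd arPrd) (ρ : ℕ ≃ ℕ)
    (S T S' : Query F arF Pc arP Prd arPrd)
    (hst : StepWith I r' S T) (hsub : S.set I ⊆ S'.set I)
    (hdisj : ∀ x ∈ (r'.rename ρ).fv, x ∉ S'.fv) :
    ∃ T', StepWith I (r'.rename ρ) S' T' ∧ T.set I ⊆ T'.set I := by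
  classical
  obtain ⟨h, ⟨v₀, hv₀⟩, hT⟩ := hst
  have hmem0 : (⟨S.p, fun i => (S.args i).eval I.fn v₀⟩ :
      Σ p : Prd, Fin (arPrd p) → D) ∈ S.set I := ⟨v₀, hv₀.2.2, rfl⟩
  obtain ⟨w₀, hw₀, heq₀⟩ := hsub hmem0
  obtain ⟨e, -⟩ := sigma_helper _ _ heq₀
  have h' : (r'.rename ρ).hp = S'.p := h.trans e
  have key : ∀ v : ℕ → D, (stepCon r' S h).Sat I v →
      ∃ u : ℕ → D, (stepCon (r'.rename ρ) S' h').Sat I u ∧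
        ∀ jx : Fin (arPrd r'.bp),
          ((r'.rename ρ).bargs jx).eval I.fn u = (r'.bargs jx).eval I.fn v := by
    intro v hv
    obtain ⟨hv1, hv2, hv3⟩ := hv
    obtain ⟨w, hw, heq⟩ := hsub ⟨v, hv3, rfl⟩
    obtain ⟨e₂, hfg⟩ := sigma_helper _ _ heq
    set u : ℕ → D := fun x => if x ∈ S'.fv then w x else v (ρ.symm x) with hu
    have fa : ∀ x ∈ r'.fv, u (ρ x) = v x := by
      intro x hx
      have hmem : ρ x ∈ (r'.rename ρ).fv := by
        rw [Rule.fv_rename]; exact Finset.mem_image_of_mem ρ hx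
      simp only [hu, if_neg (hdisj _ hmem), Equiv.symm_apply_apply]
    have termEq : ∀ t : Tm F arF, t.fv ⊆ r'.fv →
        (t.rename ρ).eval I.fn u = t.eval I.fn v := by
      intro t ht
      rw [Tm.eval_rename]
      exact Tm.eval_congr _ _ _ t fun x hx => fa x (ht hx)
    have uw : ∀ x ∈ S'.fv, u x = w x := fun x hx => by simp only [hu, if_pos hx]
    rw [argsEqCon_sat] at hv1
    refine ⟨u, ⟨?_, ?_, ?_⟩, ?_⟩
    · rw [argsEqCon_sat]
      intro i
      have lhs : ((r'.rename ρ).hargs (Fin.cast (congrArg arPrd h').symm i)).eval I.fn u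
          = (r'.hargs (Fin.cast (congrArg arPrd h').symm i)).eval I.fn v :=
        termEq _ (hargs_fv_subset r' _)
      have hcast : Fin.cast (congrArg arPrd h).symm (Fin.cast (congrArg arPrd e₂).symm i)
          = Fin.cast (congrArg arPrd h').symm i := by
        apply Fin.ext; simp
      calc ((r'.rename ρ).hargs (Fin.cast (congrArg arPrd h').symm i)).eval I.fn u
          = (r'.hargs (Fin.cast (congrArg arPrd h').symm i)).eval I.fn v := lhs
        _ = (r'.hargs (Fin.cast (congrArg arPrd h).symm
              (Fin.cast (congrArg arPrd e₂).symm i))).eval I.fn v := by rw [hcast]; rfl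
        _ = (S.args (Fin.cast (congrArg arPrd e₂).symm i)).eval I.fn v :=
            hv1 (Fin.cast (congrArg arPrd e₂).symm i)
        _ = (S'.args i).eval I.fn w := hfg i
        _ = (S'.args i).eval I.fn u :=
            (Tm.eval_congr I.fn u w _ fun x hx => uw x (qargs_fv_subset S' i hx)).symm
    · rw [show (r'.rename ρ).con = r'.con.rename ρ from rfl, Con.Sat_rename]
      exact (Con.Sat_congr I _ v r'.con fun x hx => fa x (rcon_fv_subset r' hx)).mpr hv2
    · exact (Con.Sat_congr I u w S'.con fun x hx => uw x (qcon_fv_subset S' hx)).mpr hw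
    · intro jx
      exact termEq _ (bargs_fv_subset r' jx)
  obtain ⟨u₀, hu₀, -⟩ := key v₀ hv₀
  refine ⟨⟨(r'.rename ρ).bp, (r'.rename ρ).bargs, stepCon (r'.rename ρ) S' h'⟩,
    ⟨h', ⟨u₀, hu₀⟩, rfl⟩, ?_⟩
  subst hT
  rintro a ⟨v, hv, rfl⟩
  obtain ⟨u, hu, hbeq⟩ := key v hv
  exact ⟨u, hu, congrArg (Sigma.mk r'.bp) (funext fun jx => (hbeq jx).symm)⟩

end CLP
namespace CLP
variable {F : Type} {arF : F → ℕ} {Pc : Type} {arP : Pc → ℕ}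
  {Prd : Type} {arPrd : Prd → ℕ} {D : Type}

theorem stepCon_fv_subset (r' : Rule F arF Pc arP Prd arPrd)
    (S : Query F arF Pc arP Prd arPrd) (h : r'.hp = S.p) :
    (stepCon r' S h).fv ⊆ r'.fv ∪ S.fv := by
  intro x hx
  simp only [stepCon, Con.fv, Finset.mem_union] at hx
  rcases hx with hx | hx | hx
  · rw [show (argsEqCon (fun i : Fin (arPrd S.p) =>
        r'.hargs (Fin.cast (congrArg arPrd h).symm i)) S.args : Con F arF Pc arP)
        = (List.ofFn fun i : Fin (arPrd S.p) => Con.eq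
            (r'.hargs (Fin.cast (congrArg arPrd h).symm i)) (S.args i)).foldr
              Con.and Con.tru from rfl, mem_fv_foldr] at hx
    obtain ⟨c, hc, hxc⟩ := hx
    rw [List.mem_ofFn] at hc
    obtain ⟨i, rfl⟩ := hc
    simp only [Con.fv, Finset.mem_union] at hxc
    rcases hxc with hxc | hxc
    · exact Finset.mem_union_left _ (hargs_fv_subset r' _ hxc)
    · exact Finset.mem_union_right _ (qargs_fv_subset S i hxc)
  · exact Finset.mem_union_left _ (rcon_fv_subset r' hx)
  · exact Finset.mem_union_right _ (qcon_fv_subset S hx)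

end CLP
open CLP in
/-- if `S₀` loops w.r.t. `P` then every query `S₀'` more general
than `S₀` also loops w.r.t. `P`. -/
theorem stmt18 {F : Type} {arF : F → ℕ} {Pc : Type} {arP : Pc → ℕ}
    {Prd : Type} {arPrd : Prd → ℕ} {D : Type} (I : Interp F arF Pc arP D)
    (P : Set (Rule F arF Pc arP Prd arPrd)) (S₀ S₀' : Query F arF Pc arP Prd arPrd)
    (h : Loops I P S₀) (hmg : MoreGen I S₀' S₀) :
    Loops I P S₀' := by
  classical
  obtain ⟨S, rv, hS0, hstep⟩ := h
  set N : ℕ := (S₀'.fv.sup id) + 1 with hN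
  set M : ℕ → ℕ := fun n => ((rv n).fv.sup id) + 1 with hM
  set j : ℕ → ℕ → ℕ := fun n x => N + Nat.pair n (x + M n) with hj
  have jinj : ∀ n, Function.Injective (j n) := by
    intro n x y hxy
    simp only [hj] at hxy
    have h2 := Nat.add_left_cancel hxy
    rw [Nat.pair_eq_pair] at h2
    omega
  have jout : ∀ n x, j n x ∉ (rv n).fv := by
    intro n x hx
    have h1 : j n x ≤ (rv n).fv.sup id := Finset.le_sup (f := id) hx
    have h2 : x + M n ≤ Nat.pair n (x + M n) := Nat.right_le_pair n (x + M n)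
    simp only [hj, hM] at h1 h2 ⊢
    omega
  have hperm : ∀ n, ∃ ρ : ℕ ≃ ℕ, ∀ x ∈ (rv n).fv, ρ x = j n x :=
    fun n => exists_perm_extend _ _ (jinj n) (jout n)
  choose ρ hρ using hperm
  set rv' : ℕ → Rule F arF Pc arP Prd arPrd := fun n => (rv n).rename (ρ n) with hrv'
  have hfv' : ∀ n x, x ∈ (rv' n).fv → ∃ a, x = N + Nat.pair n a := by
    intro n x hx
    rw [hrv', Rule.fv_rename] at hx
    obtain ⟨y, hy, rfl⟩ := Finset.mem_image.mp hx
    rw [hρ n y hy]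
    exact ⟨y + M n, rfl⟩
  set Inv : ℕ → Query F arF Pc arP Prd arPrd → Prop := fun n W =>
    (S n).set I ⊆ W.set I ∧
      ∀ x ∈ W.fv, x < N ∨ ∃ m a, m < n ∧ x = N + Nat.pair m a with hInv
  have hdisjInv : ∀ n W, Inv n W → ∀ x ∈ (rv' n).fv, x ∉ W.fv := by
    intro n W hW x hx hxW
    obtain ⟨a, rfl⟩ := hfv' n x hx
    rcases hW.2 _ hxW with hlt | ⟨m, b, hm, heq⟩
    · omega
    · have : Nat.pair n a = Nat.pair m b := by omega
      rw [Nat.pair_eq_pair] at this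
      omega
  have H : ∀ n W, Inv n W → ∃ T', StepWith I (rv' n) W T' ∧ Inv (n + 1) T' := by
    intro n W hW
    obtain ⟨T', hT'step, hT'sub⟩ := lifting I (rv n) (ρ n) (S n) (S (n + 1)) W
      (hstep n).2.2.2 hW.1 (hdisjInv n W hW)
    refine ⟨T', hT'step, hT'sub, ?_⟩
    obtain ⟨h', hsat, hTdef⟩ := hT'step
    intro x hx
    rw [hTdef] at hx
    simp only [Query.fv, Finset.mem_union, Finset.mem_biUnion] at hx
    rcases hx with ⟨i, -, hi⟩ | hx
    · obtain ⟨a, rfl⟩ := hfv' n x (bargs_fv_subset (rv' n) i hi)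
      exact Or.inr ⟨n, a, Nat.lt_succ_self n, rfl⟩
    · rcases Finset.mem_union.mp (stepCon_fv_subset (rv' n) W h' hx) with hx | hx
      · obtain ⟨a, rfl⟩ := hfv' n x hx
        exact Or.inr ⟨n, a, Nat.lt_succ_self n, rfl⟩
      · rcases hW.2 x hx with hlt | ⟨m, a, hm, heq⟩
        · exact Or.inl hlt
        · exact Or.inr ⟨m, a, Nat.lt_succ_of_lt hm, heq⟩
  choose f hf1 hf2 using H
  have Inv0 : Inv 0 S₀' := by
    constructor
    · rw [hS0]; exact hmg
    · intro x hx
      exact Or.inl (Nat.lt_succ_of_le (Finset.le_sup (f := id) hx))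
  let g : ∀ n, {W : Query F arF Pc arP Prd arPrd // Inv n W} := fun n =>
    Nat.rec ⟨S₀', Inv0⟩ (fun k p => ⟨f k p.1 p.2, hf2 k p.1 p.2⟩) n
  refine ⟨fun n => (g n).1, rv', rfl, fun n => ⟨?_, ?_, ?_, ?_⟩⟩
  · obtain ⟨r, hrP, ρ₀, hρ₀⟩ := (hstep n).1
    refine ⟨r, hrP, ρ₀.trans (ρ n), ?_⟩
    show (rv n).rename (⇑(ρ n)) = Rule.rename (⇑(ρ₀.trans (ρ n))) r
    rw [hρ₀, Rule.rename_comp]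
    rfl
  · rw [Finset.disjoint_left]
    intro x hx hx'
    obtain ⟨a, rfl⟩ := hfv' n x hx
    have := Finset.le_sup (f := id) hx'
    simp only [id] at this
    omega
  · intro m hm
    rw [Finset.disjoint_left]
    intro x hx hx'
    obtain ⟨a, rfl⟩ := hfv' n x hx
    obtain ⟨b, hb⟩ := hfv' m _ hx'
    have : Nat.pair n a = Nat.pair m b := by omega
    rw [Nat.pair_eq_pair] at this
    omega
  · exact hf1 n (g n).1 (g n).2
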